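/- Let C, X be bounded operators on a Hilbert space H with C a contraction (C*C ≤ I_H) and 0 < m·I_H ≤ X ≤ M·I_H, and let f be a concave operator monotone function on [m,M]. With μ_f = (f(M)-f(m))/(M-m), ν_f = (Mf(m)-mf(M))/(M-m), and γ_f = max_{m ≤ t ≤ M} f(t)/(μ_f t + ν_f), one has γ_f·(C* f(X) C + f(m)(I_H - C*C)) ≥ f(C* X C). -/

import Mathlib

/-- `f(C* X C) ≤ γ_f (C* f(X) C + f(m)(1 - C* C))` for a contraction `C`,
`0 < m • 1 ≤ X ≤ M • 1` and a concave operator monotone function `f` on `[m, M]`. -/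
theorem reverse_jensen_contraction
    {𝒜 : Type*} [CStarAlgebra 𝒜] [PartialOrder 𝒜] [StarOrderedRing 𝒜]
    (m M : ℝ) (hm : 0 < m) (hmM : m < M) (f : ℝ → ℝ)
    (hf_concave : ConcaveOn ℝ (Set.Icc m M) f)
    (hf_mono : ∀ a b : 𝒜, 0 ≤ a → a ≤ b → cfc f a ≤ cfc f b)
    (hden : ∀ t ∈ Set.Icc m M,
      0 < (f M - f m) / (M - m) * t + (M * f m - m * f M) / (M - m))
    (γ : ℝ)
    (hγ : IsGreatest ((fun t => f t /
        ((f M - f m) / (M - m) * t + (M * f m - m * f M) / (M - m))) '' Set.Icc m M) γ)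
    (C X : 𝒜) (hC : star C * C ≤ 1)
    (hXm : m • (1 : 𝒜) ≤ X) (hXM : X ≤ M • (1 : 𝒜)) :
    cfc f (star C * X * C) ≤ γ • (star C * cfc f X * C + f m • (1 - star C * C)) := by
  rcases subsingleton_or_nontrivial 𝒜 with hS | hN
  · exact le_of_eq (Subsingleton.elim _ _)
  set μ : ℝ := (f M - f m) / (M - m) with hμ
  set ν : ℝ := (M * f m - m * f M) / (M - m) with hν
  have hMm : (0:ℝ) < M - m := by linarith
  have hlm : μ * m + ν = f m := by
    rw [hμ, hν]; field_simp; ring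
  have hfm_pos : 0 < f m := by
    have h := hden m ⟨le_refl m, hmM.le⟩
    rwa [hlm] at h
  have hγ1 : 1 ≤ γ := by
    have h : f m / (μ * m + ν) ≤ γ := hγ.2 ⟨m, ⟨le_refl m, hmM.le⟩, rfl⟩
    rw [hlm, div_self hfm_pos.ne'] at h
    exact h
  have hγ0 : 0 ≤ γ := by linarith
  -- scalar inequalities
  have hchord : ∀ t ∈ Set.Icc m M, μ * t + ν ≤ f t := by
    rintro t ⟨htm, htM⟩
    have ha : (0:ℝ) ≤ (M - t)/(M - m) := div_nonneg (by linarith) hMm.le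
    have hb : (0:ℝ) ≤ (t - m)/(M - m) := div_nonneg (by linarith) hMm.le
    have hab : (M - t)/(M-m) + (t-m)/(M-m) = 1 := by field_simp; ring
    have hcomb := hf_concave.2 (Set.left_mem_Icc.2 hmM.le) (Set.right_mem_Icc.2 hmM.le) ha hb hab
    simp only [smul_eq_mul] at hcomb
    have h1 : (M - t)/(M-m) * m + (t-m)/(M-m) * M = t := by
      rw [div_mul_eq_mul_div, div_mul_eq_mul_div, ← add_div, div_eq_iff hMm.ne']
      ring
    have h2 : (M - t)/(M-m) * f m + (t-m)/(M-m) * f M = μ * t + ν := by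
      rw [hμ, hν, div_mul_eq_mul_div, div_mul_eq_mul_div, div_mul_eq_mul_div,
        ← add_div, ← add_div, div_eq_div_iff hMm.ne' hMm.ne']
      ring
    rw [h1, h2] at hcomb
    exact hcomb
  have hlineγ : ∀ t ∈ Set.Icc m M, f t ≤ γ * (μ * t + ν) := by
    intro t ht
    have h : f t / (μ * t + ν) ≤ γ := hγ.2 ⟨t, ht, rfl⟩
    exact (div_le_iff₀ (hden t ht)).mp h
  -- operator setup
  have hCC : (0:𝒜) ≤ 1 - star C * C := sub_nonneg.2 hC
  have hm1 : (0:𝒜) ≤ m • (1:𝒜) := smul_nonneg hm.le zero_le_one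
  have hX0 : (0:𝒜) ≤ X := hm1.trans hXm
  set B : 𝒜 := star C * X * C with hB
  have hB0 : (0:𝒜) ≤ B := star_left_conjugate_nonneg hX0 C
  set Y : 𝒜 := B + m • (1 - star C * C) with hY
  have hY0' : (0:𝒜) ≤ m • (1 - star C * C) := smul_nonneg hm.le hCC
  have hBY : B ≤ Y := le_add_of_nonneg_right hY0'
  have hY0 : (0:𝒜) ≤ Y := hB0.trans hBY
  have hYsa : IsSelfAdjoint Y := .of_nonneg hY0
  have hXsa : IsSelfAdjoint X := .of_nonneg hX0
  have hconj_m : m • (star C * C) ≤ B := by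
    have h := star_left_conjugate_le_conjugate hXm C
    calc m • (star C * C) = star C * (m • (1:𝒜)) * C := by
          simp [mul_smul_comm, smul_mul_assoc]
      _ ≤ B := h
  have hYm : m • (1:𝒜) ≤ Y := by
    have he : m • (1:𝒜) = m • (star C * C) + m • (1 - star C * C) := by
      rw [smul_sub]; abel
    rw [he, hY]
    exact add_le_add_left hconj_m _
  have hconj_M : B ≤ M • (star C * C) := by
    have h := star_left_conjugate_le_conjugate hXM C
    calc B ≤ star C * (M • (1:𝒜)) * C := h
      _ = M • (star C * C) := by simp [mul_smul_comm, smul_mul_assoc]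
  have hYM : Y ≤ M • (1:𝒜) := by
    have h1 : Y ≤ M • (star C * C) + m • (1 - star C * C) := by
      rw [hY]; exact add_le_add_left hconj_M _
    have h2 : M • (star C * C) + m • (1 - star C * C)
        = M • (1:𝒜) - (M - m) • (1 - star C * C) := by module
    have h3 : (0:𝒜) ≤ (M - m) • (1 - star C * C) := smul_nonneg hMm.le hCC
    calc Y ≤ _ := h1
      _ ≤ M • (1:𝒜) := by rw [h2]; exact sub_le_self _ h3
  -- spectra
  have hspecY : spectrum ℝ Y ⊆ Set.Icc m M := by
    intro x hx
    constructor
    · exact (algebraMap_le_iff_le_spectrum (a := Y) (r := m) hYsa).mp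
        (by rwa [Algebra.algebraMap_eq_smul_one]) x hx
    · exact (le_algebraMap_iff_spectrum_le (a := Y) (r := M) hYsa).mp
        (by rwa [Algebra.algebraMap_eq_smul_one]) x hx
  have hspecX : spectrum ℝ X ⊆ Set.Icc m M := by
    intro x hx
    constructor
    · exact (algebraMap_le_iff_le_spectrum (a := X) (r := m) hXsa).mp
        (by rwa [Algebra.algebraMap_eq_smul_one]) x hx
    · exact (le_algebraMap_iff_spectrum_le (a := X) (r := M) hXsa).mp
        (by rwa [Algebra.algebraMap_eq_smul_one]) x hx
  -- continuity of f on the relevant spectra, from operator monotonicity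
  have key_cont : ∀ a : 𝒜, m • (1:𝒜) ≤ a → ContinuousOn f (spectrum ℝ a) := by
    intro a hma
    by_contra hc
    have h0 : cfc f a = 0 := cfc_apply_of_not_continuousOn a hc
    have h := hf_mono (m • (1:𝒜)) a hm1 hma
    have hcm : cfc f (m • (1:𝒜)) = (f m) • (1:𝒜) := by
      rw [show m • (1:𝒜) = algebraMap ℝ 𝒜 m from (Algebra.algebraMap_eq_smul_one m).symm,
        cfc_algebraMap, Algebra.algebraMap_eq_smul_one]
    rw [h0, hcm] at h
    have h1 : (1:𝒜) ≤ 0 := by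
      have h2 := smul_le_smul_of_nonneg_left h (inv_nonneg.mpr hfm_pos.le)
      rwa [smul_smul, inv_mul_cancel₀ hfm_pos.ne', one_smul, smul_zero] at h2
    exact one_ne_zero (le_antisymm h1 zero_le_one)
  have hcontY : ContinuousOn f (spectrum ℝ Y) := key_cont Y hYm
  have hcontX : ContinuousOn f (spectrum ℝ X) := key_cont X hXm
  -- affine cfc computation
  have aff : ∀ (a : 𝒜), IsSelfAdjoint a → ∀ c d : ℝ,
      cfc (fun t : ℝ => c * t + d) a = c • a + d • (1:𝒜) := by
    intro a ha c d
    rw [cfc_add_const d (fun t : ℝ => c * t) a (by fun_prop) ha,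
      cfc_const_mul_id c a ha, Algebra.algebraMap_eq_smul_one]
  -- main chain
  have step1 : cfc f B ≤ cfc f Y := hf_mono B Y hB0 hBY
  have step2 : cfc f Y ≤ (γ * μ) • Y + (γ * ν) • (1:𝒜) := by
    have h := cfc_mono (a := Y) (f := f) (g := fun t : ℝ => (γ * μ) * t + γ * ν)
      (fun x hx => (hlineγ x (hspecY hx)).trans_eq (by ring)) hcontY (by fun_prop)
    rwa [aff Y hYsa (γ * μ) (γ * ν)] at h
  have hfX : μ • X + ν • (1:𝒜) ≤ cfc f X := by
    have h := cfc_mono (a := X) (f := fun t : ℝ => μ * t + ν) (g := f)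
      (fun x hx => hchord x (hspecX hx)) (by fun_prop) hcontX
    rwa [aff X hXsa μ ν] at h
  have hconj_f : μ • B + ν • (star C * C) ≤ star C * cfc f X * C := by
    have h := star_left_conjugate_le_conjugate hfX C
    calc μ • B + ν • (star C * C) = star C * (μ • X + ν • (1:𝒜)) * C := by
          rw [hB]; simp [mul_add, add_mul, mul_smul_comm, smul_mul_assoc]
      _ ≤ _ := h
  have hfm_eq : f m = m * μ + ν := by rw [← hlm]; ring
  have final_eq : (γ * μ) • Y + (γ * ν) • (1:𝒜)
      = γ • (μ • B + ν • (star C * C) + f m • (1 - star C * C)) := by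
    rw [hY, hfm_eq]; module
  calc cfc f B ≤ (γ * μ) • Y + (γ * ν) • (1:𝒜) := step1.trans step2
    _ = γ • (μ • B + ν • (star C * C) + f m • (1 - star C * C)) := final_eq
    _ ≤ γ • (star C * cfc f X * C + f m • (1 - star C * C)) :=
        smul_le_smul_of_nonneg_left (add_le_add_left hconj_f _) hγ0
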